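/- For all integers n ≥ 0, 5·w_{2n+1} = (6 + 6n)·F_{2n+1} + (4 + 8n)·F_{2n+2}. -/
import Mathlib


theorem stmt_15 (r R1 R2 w : ℕ → ℕ)
    (hr : ∀ n : ℕ, 2 ≤ n → r n = r (n - 1) + r (n - 2))
    (hR1 : ∀ n : ℕ, 2 ≤ n → R1 n = R1 (n - 2) + r n)
    (hR2 : ∀ n : ℕ, 2 ≤ n → R2 n = R2 (n - 1) + R2 (n - 2) + R1 (n - 2) + r n)
    (hr0 : r 0 = 1) (hr1 : r 1 = 1)
    (hR10 : R1 0 = 1) (hR11 : R1 1 = 1)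
    (hR20 : R2 0 = 1) (hR21 : R2 1 = 2)
    (hw : ∀ n : ℕ, w n = R2 n) :
    ∀ n : ℕ, 5 * w (2 * n + 1)
      = (6 + 6 * n) * Nat.fib (2 * n + 1) + (4 + 8 * n) * Nat.fib (2 * n + 2) := by
  -- r m = fib (m+1)
  have hrf : ∀ m : ℕ, r m = Nat.fib (m + 1) ∧ r (m + 1) = Nat.fib (m + 2) := by
    intro m
    induction m with
    | zero => exact ⟨by simpa using hr0, by simpa using hr1⟩
    | succ k ih =>
      refine ⟨ih.2, ?_⟩
      show r (k + 2) = Nat.fib (k + 3)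
      have h := hr (k + 2) (by omega)
      rw [show k + 2 - 1 = k + 1 from rfl, show k + 2 - 2 = k from rfl] at h
      have f : Nat.fib (k + 3) = Nat.fib (k + 1) + Nat.fib (k + 2) := Nat.fib_add_two
      omega
  -- R1 m + m % 2 = fib (m+2)
  have hR1f : ∀ m : ℕ, R1 m + m % 2 = Nat.fib (m + 2)
      ∧ R1 (m + 1) + (m + 1) % 2 = Nat.fib (m + 3) := by
    intro m
    induction m with
    | zero => exact ⟨by simpa using hR10, by rw [hR11]; decide⟩
    | succ k ih =>
      refine ⟨ih.2, ?_⟩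
      show R1 (k + 2) + (k + 2) % 2 = Nat.fib (k + 4)
      have h := hR1 (k + 2) (by omega)
      rw [show k + 2 - 2 = k from rfl] at h
      have hr2 := (hrf (k + 2)).1
      rw [show k + 2 + 1 = k + 3 from rfl] at hr2
      have f : Nat.fib (k + 4) = Nat.fib (k + 2) + Nat.fib (k + 3) := Nat.fib_add_two
      have i1 := ih.1
      omega
  -- 5 * R2 m + 5 * (m % 2) = (3m+3) fib m + 4m fib (m+1) + 5
  have hR2f : ∀ m : ℕ,
      (5 * R2 m + 5 * (m % 2) = (3 * m + 3) * Nat.fib m + 4 * m * Nat.fib (m + 1) + 5)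
      ∧ (5 * R2 (m + 1) + 5 * ((m + 1) % 2)
          = (3 * m + 6) * Nat.fib (m + 1) + (4 * m + 4) * Nat.fib (m + 2) + 5) := by
    intro m
    induction m with
    | zero =>
      constructor
      · simp [hR20]
      · norm_num [hR21]
    | succ k ih =>
      have ih1 := ih.1
      have ih2 := ih.2
      refine ⟨by linarith [ih2], ?_⟩
      show 5 * R2 (k + 2) + 5 * ((k + 2) % 2)
          = (3 * (k + 1) + 6) * Nat.fib (k + 2) + (4 * (k + 1) + 4) * Nat.fib (k + 3) + 5
      have h2 := hR2 (k + 2) (by omega)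
      rw [show k + 2 - 1 = k + 1 from rfl, show k + 2 - 2 = k from rfl] at h2
      have hrn := (hrf (k + 2)).1
      rw [show k + 2 + 1 = k + 3 from rfl] at hrn
      have hR1n := (hR1f k).1
      have f2 : Nat.fib (k + 2) = Nat.fib k + Nat.fib (k + 1) := Nat.fib_add_two
      have f3 : Nat.fib (k + 3) = Nat.fib (k + 1) + Nat.fib (k + 2) := Nat.fib_add_two
      rcases Nat.mod_two_eq_zero_or_one k with hp | hp
      · have e1 : (k + 1) % 2 = 1 := by omega
        have e2 : (k + 2) % 2 = 0 := by omega
        rw [hp] at ih1 hR1n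
        rw [e1] at ih2
        rw [e2, f3, f2]
        rw [f2] at ih2 hR1n
        rw [f3, f2] at hrn
        linarith [ih1, ih2, h2, hrn, hR1n]
      · have e1 : (k + 1) % 2 = 0 := by omega
        have e2 : (k + 2) % 2 = 1 := by omega
        rw [hp] at ih1 hR1n
        rw [e1] at ih2
        rw [e2, f3, f2]
        rw [f2] at ih2 hR1n
        rw [f3, f2] at hrn
        linarith [ih1, ih2, h2, hrn, hR1n]
  intro n
  rw [hw]
  have H := (hR2f (2 * n + 1)).1
  have hp : (2 * n + 1) % 2 = 1 := by omega
  rw [hp] at H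
  rw [show 2 * n + 1 + 1 = 2 * n + 2 from rfl] at H
  linarith [H]
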